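/- Confluence of combinatory logic: the single-step reduction relation on combinatory logic terms generated by K x y → x and S x y z → x z (y z) under congruence closure is confluent: if Star Red M N₁ and Star Red M N₂, then there exists P with Star Red N₁ P and Star Red N₂ P. -/

import Mathlib

namespace Metatheory

inductive CTerm where
  | S : CTerm
  | K : CTerm
  | app : CTerm → CTerm → CTerm

inductive Red : CTerm → CTerm → Prop where
  | k {x y : CTerm} : Red (.app (.app .K x) y) x
  | s {x y z : CTerm} :
      Red (.app (.app (.app .S x) y) z) (.app (.app x z) (.app y z))
  | appL {M M' N : CTerm} : Red M M' → Red (.app M N) (.app M' N)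
  | appR {M N N' : CTerm} : Red N N' → Red (.app M N) (.app M N')

def Star {α : Type*} (r : α → α → Prop) : α → α → Prop :=
  Relation.ReflTransGen r

/-- Parallel reduction. -/
inductive PRed : CTerm → CTerm → Prop where
  | S : PRed .S .S
  | K : PRed .K .K
  | k {x x' y : CTerm} : PRed x x' → PRed (.app (.app .K x) y) x'
  | s {x x' y y' z z' : CTerm} : PRed x x' → PRed y y' → PRed z z' →
      PRed (.app (.app (.app .S x) y) z) (.app (.app x' z') (.app y' z'))
  | app {M M' N N' : CTerm} : PRed M M' → PRed N N' →
      PRed (.app M N) (.app M' N')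

theorem PRed.refl : ∀ M, PRed M M
  | .S => .S
  | .K => .K
  | .app M N => .app (PRed.refl M) (PRed.refl N)

theorem red_pred {M N : CTerm} (h : Red M N) : PRed M N := by
  induction h with
  | k => exact .k (PRed.refl _)
  | s => exact .s (PRed.refl _) (PRed.refl _) (PRed.refl _)
  | appL _ ih => exact .app ih (PRed.refl _)
  | appR _ ih => exact .app (PRed.refl _) ih

theorem star_appL {M M' N : CTerm} (h : Star Red M M') :
    Star Red (.app M N) (.app M' N) :=
  Relation.ReflTransGen.lift (fun x => CTerm.app x N) (fun _ _ h => Red.appL h) _ _ h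

theorem star_appR {M N N' : CTerm} (h : Star Red N N') :
    Star Red (.app M N) (.app M N') :=
  Relation.ReflTransGen.lift (fun x => CTerm.app M x) (fun _ _ h => Red.appR h) _ _ h

theorem pred_star {M N : CTerm} (h : PRed M N) : Star Red M N := by
  induction h with
  | S => exact .refl
  | K => exact .refl
  | k _ ih => exact (Relation.ReflTransGen.single Red.k).trans ih
  | s _ _ _ ihx ihy ihz =>
      exact (Relation.ReflTransGen.single Red.s).trans
        (((star_appL (star_appL ihx)).trans (star_appL (star_appR ihz))).trans
          ((star_appR (star_appL ihy)).trans (star_appR (star_appR ihz))))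
  | app _ _ ih₁ ih₂ => exact (star_appL ih₁).trans (star_appR ih₂)

/-- Complete development. -/
def dev : CTerm → CTerm
  | .S => .S
  | .K => .K
  | .app (.app .K x) _ => dev x
  | .app (.app (.app .S x) y) z => .app (.app (dev x) (dev z)) (.app (dev y) (dev z))
  | .app M N => .app (dev M) (dev N)

theorem triangle {M N : CTerm} (h : PRed M N) : PRed N (dev M) := by
  induction h with
  | S => exact .S
  | K => exact .K
  | k _ ih => exact ih
  | s _ _ _ ihx ihy ihz =>
      exact .app (.app ihx ihz) (.app ihy ihz)
  | @app M₁ N₁ M₂ N₂ h₁ h₂ ih₁ ih₂ =>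
      cases h₁ with
      | S => exact .app ih₁ ih₂
      | K => exact .app ih₁ ih₂
      | k _ => exact .app ih₁ ih₂
      | s _ _ _ => exact .app ih₁ ih₂
      | @app A A' B B' hA hB =>
          cases hA with
          | S => exact .app ih₁ ih₂
          | K =>
              -- M₁ = app K B : K-redex, dev (app (app K B) M₂) = dev B
              cases ih₁ with
              | app hK hB' => exact .k hB'
          | k _ => exact .app ih₁ ih₂
          | s _ _ _ => exact .app ih₁ ih₂
          | @app C C' D D' hC hD =>
              cases hC with
              | S =>
                  -- M₁ = app (app S D) B : S-redex
                  cases ih₁ with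
                  | app hSD hB' =>
                      cases hSD with
                      | app hS hD' => exact .s hD' hB' ih₂
              | K => exact .app ih₁ ih₂
              | k _ => exact .app ih₁ ih₂
              | s _ _ _ => exact .app ih₁ ih₂
              | app _ _ => exact .app ih₁ ih₂

theorem pred_diamond : ∀ a b c, PRed a b → PRed a c →
    ∃ d, Relation.ReflGen PRed b d ∧ Relation.ReflTransGen PRed c d :=
  fun a b c h₁ h₂ =>
    ⟨dev a, Relation.ReflGen.single (triangle h₁),
      Relation.ReflTransGen.single (triangle h₂)⟩

theorem star_pred_iff {M N : CTerm} : Star Red M N ↔ Relation.ReflTransGen PRed M N := by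
  constructor
  · exact fun h => Relation.ReflTransGen.mono (fun _ _ => red_pred) _ _ h
  · intro h
    induction h with
    | refl => exact .refl
    | tail _ h ih => exact ih.trans (pred_star h)

theorem cl_confluent {M N₁ N₂ : CTerm}
    (h₁ : Star Red M N₁) (h₂ : Star Red M N₂) :
    ∃ P, Star Red N₁ P ∧ Star Red N₂ P := by
  obtain ⟨P, hP₁, hP₂⟩ :=
    Relation.church_rosser pred_diamond (star_pred_iff.mp h₁) (star_pred_iff.mp h₂)
  exact ⟨P, star_pred_iff.mpr hP₁, star_pred_iff.mpr hP₂⟩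

end Metatheory
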